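/- Let n, m be positive integers, let R be an invertible n×n real matrix, let Φ be an m×n real matrix, let y ∈ ℝᵐ, and let ρ > 0. A vector g* ∈ ℝⁿ is a global minimizer of the robust objective g ↦ sup{ ‖(Φ + Δ)g − y‖ : Δ ∈ ℝ^{m×n}, ‖ΔR‖_F ≤ ρ } if and only if g* is a global minimizer of g ↦ ‖Φg − y‖ + ρ‖R⁻¹g‖. -/

import Mathlib

open Matrix
open scoped BigOperators

/-- Euclidean norm of a real vector. -/
noncomputable def euclNorm {k : ℕ} (v : Fin k → ℝ) : ℝ :=
  Real.sqrt (∑ i, (v i) ^ 2)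

/-- Frobenius norm of a real matrix. -/
noncomputable def frobNorm {m n : ℕ} (A : Matrix (Fin m) (Fin n) ℝ) : ℝ :=
  Real.sqrt (∑ i, ∑ j, (A i j) ^ 2)

lemma euclNorm_nonneg {k : ℕ} (v : Fin k → ℝ) : 0 ≤ euclNorm v := Real.sqrt_nonneg _

lemma frobNorm_nonneg {m n : ℕ} (A : Matrix (Fin m) (Fin n) ℝ) : 0 ≤ frobNorm A :=
  Real.sqrt_nonneg _

lemma euclNorm_eq {k : ℕ} (v : Fin k → ℝ) :
    euclNorm v = ‖(WithLp.equiv 2 (Fin k → ℝ)).symm v‖ := by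
  rw [EuclideanSpace.norm_eq]
  simp [euclNorm, sq_abs]

lemma euclNorm_add_le {k : ℕ} (a b : Fin k → ℝ) :
    euclNorm (a + b) ≤ euclNorm a + euclNorm b := by
  simp only [euclNorm_eq]
  rw [show (WithLp.equiv 2 (Fin k → ℝ)).symm (a + b)
      = (WithLp.equiv 2 (Fin k → ℝ)).symm a + (WithLp.equiv 2 (Fin k → ℝ)).symm b from rfl]
  exact norm_add_le _ _

lemma euclNorm_smul {k : ℕ} (c : ℝ) (v : Fin k → ℝ) :
    euclNorm (c • v) = |c| * euclNorm v := by
  simp only [euclNorm_eq]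
  rw [show (WithLp.equiv 2 (Fin k → ℝ)).symm (c • v)
      = c • (WithLp.equiv 2 (Fin k → ℝ)).symm v from rfl]
  rw [norm_smul, Real.norm_eq_abs]

lemma euclNorm_eq_zero {k : ℕ} {v : Fin k → ℝ} (h : euclNorm v = 0) : v = 0 := by
  rw [euclNorm_eq, norm_eq_zero] at h
  exact congrArg (WithLp.equiv 2 (Fin k → ℝ)) h

lemma euclNorm_single {k : ℕ} (i : Fin k) : euclNorm (Pi.single i (1:ℝ)) = 1 := by
  unfold euclNorm
  have h1 : (∑ j : Fin k, ((Pi.single i (1:ℝ) : Fin k → ℝ) j) ^ 2) = 1 := by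
    rw [Finset.sum_eq_single i]
    · simp
    · intro j _ hj; simp [Pi.single_apply, hj]
    · simp
  rw [h1, Real.sqrt_one]

lemma sq_euclNorm {k : ℕ} (v : Fin k → ℝ) : euclNorm v ^ 2 = ∑ i, (v i) ^ 2 :=
  Real.sq_sqrt (by positivity)

lemma frobNorm_smul {m n : ℕ} (c : ℝ) (A : Matrix (Fin m) (Fin n) ℝ) :
    frobNorm (c • A) = |c| * frobNorm A := by
  unfold frobNorm
  rw [show (∑ i, ∑ j, ((c • A) i j) ^ 2) = c ^ 2 * ∑ i, ∑ j, (A i j) ^ 2 by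
    simp [Matrix.smul_apply, mul_pow, Finset.mul_sum]]
  rw [Real.sqrt_mul (sq_nonneg c), Real.sqrt_sq_eq_abs]

lemma frobNorm_vecMulVec {m n : ℕ} (r : Fin m → ℝ) (u : Fin n → ℝ) :
    frobNorm (vecMulVec r u) = euclNorm r * euclNorm u := by
  unfold frobNorm euclNorm
  rw [← Real.sqrt_mul (by positivity)]
  congr 1
  rw [Finset.sum_mul_sum]
  simp [vecMulVec_apply, mul_pow]

lemma euclNorm_mulVec_le {m n : ℕ} (A : Matrix (Fin m) (Fin n) ℝ) (x : Fin n → ℝ) :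
    euclNorm (A *ᵥ x) ≤ frobNorm A * euclNorm x := by
  unfold euclNorm frobNorm
  rw [← Real.sqrt_mul (by positivity)]
  apply Real.sqrt_le_sqrt
  rw [Finset.sum_mul]
  apply Finset.sum_le_sum
  intro i _
  simpa [Matrix.mulVec, dotProduct] using Finset.sum_mul_sq_le_sq_mul_sq Finset.univ (A i) x

lemma vecMulVec_mulVec {m n : ℕ} (w : Fin m → ℝ) (v x : Fin n → ℝ) :
    vecMulVec w v *ᵥ x = (v ⬝ᵥ x) • w := by
  funext i
  simp [vecMulVec_apply, Matrix.mulVec, dotProduct, Finset.mul_sum, mul_assoc, mul_comm,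
    mul_left_comm]

lemma key_sup (n m : ℕ) (hm : 0 < m)
    (R : Matrix (Fin n) (Fin n) ℝ) (hR : IsUnit R.det)
    (Φ : Matrix (Fin m) (Fin n) ℝ) (y : Fin m → ℝ)
    (ρ : ℝ) (hρ : 0 < ρ) (g : Fin n → ℝ) :
    sSup ((fun Δ => euclNorm ((Φ + Δ) *ᵥ g - y)) ''
        {Δ : Matrix (Fin m) (Fin n) ℝ | frobNorm (Δ * R) ≤ ρ}) =
      euclNorm (Φ *ᵥ g - y) + ρ * euclNorm (R⁻¹ *ᵥ g) := by
  set r := Φ *ᵥ g - y with hr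
  set u := R⁻¹ *ᵥ g with hu
  set a := euclNorm r with ha
  set b := euclNorm u with hb
  have hRu : R *ᵥ u = g := by
    rw [hu, Matrix.mulVec_mulVec, Matrix.mul_nonsing_inv R hR, Matrix.one_mulVec]
  have hval : ∀ Δ : Matrix (Fin m) (Fin n) ℝ,
      (Φ + Δ) *ᵥ g - y = r + (Δ * R) *ᵥ u := by
    intro Δ
    rw [← Matrix.mulVec_mulVec, hRu, Matrix.add_mulVec, hr]
    abel
  have hub : ∀ x ∈ ((fun Δ => euclNorm ((Φ + Δ) *ᵥ g - y)) ''
      {Δ : Matrix (Fin m) (Fin n) ℝ | frobNorm (Δ * R) ≤ ρ}), x ≤ a + ρ * b := by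
    rintro x ⟨Δ, hΔ, rfl⟩
    show euclNorm ((Φ + Δ) *ᵥ g - y) ≤ a + ρ * b
    rw [hval]
    calc euclNorm (r + (Δ * R) *ᵥ u) ≤ euclNorm r + euclNorm ((Δ * R) *ᵥ u) :=
          euclNorm_add_le _ _
      _ ≤ a + frobNorm (Δ * R) * euclNorm u := by
          gcongr
          exact euclNorm_mulVec_le _ _
      _ ≤ a + ρ * b := by
          gcongr
          · exact euclNorm_nonneg u
          · exact hΔ
  have hmem0 : (0 : Matrix (Fin m) (Fin n) ℝ) ∈
      {Δ : Matrix (Fin m) (Fin n) ℝ | frobNorm (Δ * R) ≤ ρ} := by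
    simp only [Set.mem_setOf_eq, Matrix.zero_mul]
    rw [show frobNorm (0 : Matrix (Fin m) (Fin n) ℝ) = 0 by simp [frobNorm]]
    exact hρ.le
  have hbdd : BddAbove ((fun Δ => euclNorm ((Φ + Δ) *ᵥ g - y)) ''
      {Δ : Matrix (Fin m) (Fin n) ℝ | frobNorm (Δ * R) ≤ ρ}) := ⟨a + ρ * b, hub⟩
  apply le_antisymm
  · exact csSup_le ⟨_, Set.mem_image_of_mem _ hmem0⟩ hub
  · -- exhibit an element achieving the value a + ρ * b
    rcases eq_or_ne b 0 with hb0 | hb0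
    · have hu0 : u = 0 := euclNorm_eq_zero (by rw [← hb]; exact hb0)
      have : euclNorm ((Φ + 0) *ᵥ g - y) = a + ρ * b := by
        rw [hval, hu0, hb0]
        simp [Matrix.zero_mul]
        exact ha.symm
      rw [← this]
      exact le_csSup hbdd (Set.mem_image_of_mem _ hmem0)
    · have hbpos : 0 < b := lt_of_le_of_ne (euclNorm_nonneg u) (Ne.symm hb0)
      set r' : Fin m → ℝ := if a = 0 then Pi.single ⟨0, hm⟩ (1:ℝ) else r with hr'
      set a' := euclNorm r' with ha'
      have ha'pos : 0 < a' := by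
        rw [ha', hr']
        split_ifs with h
        · rw [euclNorm_single]; exact one_pos
        · exact lt_of_le_of_ne (euclNorm_nonneg r) (Ne.symm h)
      set c := ρ / (a' * b) with hc
      have hcpos : 0 < c := div_pos hρ (mul_pos ha'pos hbpos)
      set Δ₀ := (c • vecMulVec r' u) * R⁻¹ with hΔ₀
      have hΔ₀R : Δ₀ * R = c • vecMulVec r' u :=
        Matrix.nonsing_inv_mul_cancel_right R _ hR
      have hmem : Δ₀ ∈ {Δ : Matrix (Fin m) (Fin n) ℝ | frobNorm (Δ * R) ≤ ρ} := by
        simp only [Set.mem_setOf_eq, hΔ₀R]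
        rw [frobNorm_smul, frobNorm_vecMulVec, ← ha', ← hb, abs_of_pos hcpos, hc,
          div_mul_cancel₀ _ (by positivity : a' * b ≠ 0)]
      have hdot : u ⬝ᵥ u = b ^ 2 := by
        rw [hb, sq_euclNorm]
        simp [dotProduct, sq]
      have hvec : (Φ + Δ₀) *ᵥ g - y = r + (c * b ^ 2) • r' := by
        rw [hval, hΔ₀R, Matrix.smul_mulVec, vecMulVec_mulVec, hdot, smul_smul]
      have hcb : c * b ^ 2 = ρ * b / a' := by
        rw [hc]; field_simp
      have hvalue : euclNorm ((Φ + Δ₀) *ᵥ g - y) = a + ρ * b := by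
        rw [hvec]
        by_cases h : a = 0
        · have hr0 : r = 0 := euclNorm_eq_zero (ha ▸ h)
          have hr'1 : r' = Pi.single ⟨0, hm⟩ (1:ℝ) := by rw [hr', if_pos h]
          have ha'1 : a' = 1 := by rw [ha', hr'1, euclNorm_single]
          rw [hr0, zero_add, euclNorm_smul, hr'1, euclNorm_single, hcb, ha'1, h]
          rw [abs_of_pos (by positivity)]
          ring
        · have hr'r : r' = r := by rw [hr', if_neg h]
          have ha'a : a' = a := by rw [ha', hr'r, ← ha]
          have hapos : 0 < a := lt_of_le_of_ne (euclNorm_nonneg r) (Ne.symm h)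
          rw [hr'r, show r + (c * b ^ 2) • r = (1 + c * b ^ 2) • r by
            rw [add_smul, one_smul], euclNorm_smul, ← ha,
            abs_of_pos (by positivity), hcb, ha'a]
          field_simp
      rw [← hvalue]
      exact le_csSup hbdd (Set.mem_image_of_mem _ hmem)

/-- The robust least-squares problem and the problem of minimizing
‖Φg − y‖ + ρ‖R⁻¹g‖ have the same global minimizers. -/
theorem robust_LS_iff_regularized_form
    (n m : ℕ) (hn : 0 < n) (hm : 0 < m)
    (R : Matrix (Fin n) (Fin n) ℝ) (hR : IsUnit R.det)
    (Φ : Matrix (Fin m) (Fin n) ℝ) (y : Fin m → ℝ)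
    (ρ : ℝ) (hρ : 0 < ρ) (gstar : Fin n → ℝ) :
    (∀ g : Fin n → ℝ,
        sSup ((fun Δ => euclNorm ((Φ + Δ) *ᵥ gstar - y)) ''
            {Δ : Matrix (Fin m) (Fin n) ℝ | frobNorm (Δ * R) ≤ ρ}) ≤
          sSup ((fun Δ => euclNorm ((Φ + Δ) *ᵥ g - y)) ''
            {Δ : Matrix (Fin m) (Fin n) ℝ | frobNorm (Δ * R) ≤ ρ})) ↔
      (∀ g : Fin n → ℝ,
        euclNorm (Φ *ᵥ gstar - y) + ρ * euclNorm (R⁻¹ *ᵥ gstar) ≤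
          euclNorm (Φ *ᵥ g - y) + ρ * euclNorm (R⁻¹ *ᵥ g)) := by
  have hkey := key_sup n m hm R hR Φ y ρ hρ
  simp only [hkey]
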